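/- Let M be a real vector space with a symmetric bilinear form of signature having at least two positive squares, and let v1, v2 ∈ M be vectors with q(v1) > 0 and q(v2) > 0. Then there exists a vector v ∈ M such that the bilinear form is positive definite on both the plane spanned by v and v1 and the plane spanned by v and v2. -/

import Mathlib

open Module

/-- The restriction of the bilinear form `B` to the submodule `W` is positive definite. -/
def PosDefOn {L : Type*} [AddCommGroup L] [Module ℝ L]
    (B : L →ₗ[ℝ] L →ₗ[ℝ] ℝ) (W : Submodule ℝ L) : Prop :=
  ∀ x ∈ W, x ≠ 0 → 0 < B x x

/-- A purely real-number lemma: given positive `q1, q2, qu`, the quadratic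
`(q1*q2 - b^2) + (-(2*b*c))*s + (qu*q2 - c^2)*s^2` takes a positive value at some `s ≠ 0`. -/
lemma key_real (q1 q2 qu b c : ℝ) (h1 : 0 < q1) (h2 : 0 < q2) (hu : 0 < qu) :
    ∃ s : ℝ, s ≠ 0 ∧ 0 < (q1*q2 - b^2) + (-(2*b*c))*s + (qu*q2 - c^2)*s^2 := by
  set α := q1*q2 - b^2 with hα
  set β := qu*q2 - c^2 with hβ
  set γ := -(2*b*c) with hγ
  rcases lt_or_ge 0 α with ha | ha
  · -- small s
    have hD : (0:ℝ) < |γ| + |β| + α + 1 := by positivity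
    refine ⟨α / (|γ| + |β| + α + 1), by positivity, ?_⟩
    set s := α / (|γ| + |β| + α + 1) with hs
    have hs0 : 0 < s := by positivity
    have hs1 : s ≤ 1 := by
      rw [hs, div_le_one hD]; nlinarith [abs_nonneg γ, abs_nonneg β]
    have hss : s^2 ≤ s := by nlinarith
    have hDs : (|γ| + |β| + α + 1) * s = α := by rw [hs]; field_simp
    have e1 : -|γ| * s ≤ γ * s :=
      mul_le_mul_of_nonneg_right (neg_abs_le γ) hs0.le
    have e2 : -|β| * s^2 ≤ β * s^2 :=
      mul_le_mul_of_nonneg_right (neg_abs_le β) (sq_nonneg s)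
    have e3 : |β| * s^2 ≤ |β| * s := mul_le_mul_of_nonneg_left hss (abs_nonneg β)
    nlinarith [mul_pos (show (0:ℝ) < α + 1 by linarith) hs0]
  · rcases lt_trichotomy β 0 with hb | hb | hb
    · -- β < 0, α ≤ 0 : vertex of the parabola
      have hbne : b ≠ 0 := by
        intro h; rw [hα, h] at ha; nlinarith
      have hcne : c ≠ 0 := by
        intro h; rw [hβ, h] at hb; nlinarith
      have hγne : γ ≠ 0 := by
        rw [hγ]
        exact neg_ne_zero.mpr (mul_ne_zero (mul_ne_zero two_ne_zero hbne) hcne)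
      refine ⟨-γ/(2*β), div_ne_zero (neg_ne_zero.mpr hγne) (by intro h; nlinarith), ?_⟩
      have key : γ^2 > 4*α*β := by
        have h01 : 0 ≤ b^2 - q1*q2 := by rw [hα] at ha; linarith
        have h02 : 0 < c^2 - qu*q2 := by rw [hβ] at hb; linarith
        have h03 : 0 < c^2 := by nlinarith [mul_pos hu h2]
        have e1 : γ^2 = 4*(b^2*c^2) := by rw [hγ]; ring
        have e2 : 4*α*β = 4*((b^2 - q1*q2)*(c^2 - qu*q2)) := by rw [hα, hβ]; ring
        rw [e1, e2]
        nlinarith [mul_pos (mul_pos h1 h2) h02,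
          mul_nonneg (mul_nonneg h01 hu.le) h2.le]
      have hβne : β ≠ 0 := ne_of_lt hb
      have hval : α + γ * (-γ/(2*β)) + β * (-γ/(2*β))^2 = (4*α*β - γ^2)/(4*β) := by
        field_simp; ring
      rw [hval]
      exact div_pos_of_neg_of_neg (by linarith) (by linarith)
    · -- β = 0, α ≤ 0 : a line with nonzero slope
      have hcne : c ≠ 0 := by
        intro h; rw [hβ, h] at hb; nlinarith [mul_pos hu h2]
      have hbne : b ≠ 0 := by
        intro h; rw [hα, h] at ha; nlinarith [mul_pos h1 h2]
      have hγne : γ ≠ 0 := by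
        rw [hγ]
        exact neg_ne_zero.mpr (mul_ne_zero (mul_ne_zero two_ne_zero hbne) hcne)
      refine ⟨(1 - α)/γ, div_ne_zero (by intro h; nlinarith) hγne, ?_⟩
      have : α + γ * ((1-α)/γ) + β * ((1-α)/γ)^2 = 1 + β * ((1-α)/γ)^2 := by
        field_simp; ring
      rw [this, hb]; norm_num
    · -- β > 0, α ≤ 0 : large s
      refine ⟨(|α| + |γ| + β)/β, div_ne_zero (by positivity) (ne_of_gt hb), ?_⟩
      set s := (|α| + |γ| + β)/β with hs
      have hs1 : 1 ≤ s := by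
        rw [hs, le_div_iff₀ hb]; nlinarith [abs_nonneg α, abs_nonneg γ]
      have hbs : β * s = |α| + |γ| + β := by rw [hs]; field_simp
      have h5 : β*s^2 = (|α| + |γ| + β)*s := by rw [pow_two, ← mul_assoc, hbs]
      have h6 : -α ≤ |α| := neg_le_abs α
      have h7 : -|γ| * s ≤ γ * s :=
        mul_le_mul_of_nonneg_right (neg_abs_le γ) (le_trans zero_le_one hs1)
      have h8 : |α| ≤ |α| * s := by nlinarith [abs_nonneg α]
      have h9 : β ≤ β * s := by nlinarith
      linarith

lemma aux_quad_pos (qx qy bxy p q : ℝ) (hx : 0 < qx) (hD : bxy^2 < qx*qy)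
    (h : p ≠ 0 ∨ q ≠ 0) : 0 < p^2*qx + 2*p*q*bxy + q^2*qy := by
  rcases eq_or_ne q 0 with hq | hq
  · have hp : p ≠ 0 := h.resolve_right fun hq' => hq' hq
    subst hq
    have : 0 < p^2 := by positivity
    nlinarith
  · have hq2 : 0 < q^2 := by positivity
    nlinarith [sq_nonneg (p*qx + q*bxy), mul_pos hq2 (sub_pos.mpr hD), hx]

lemma aux_expand {M : Type*} [AddCommGroup M] [Module ℝ M]
    (B : M →ₗ[ℝ] M →ₗ[ℝ] ℝ) (hsymm : ∀ x y, B x y = B y x) (x y : M) (p q : ℝ) :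
    B (p • x + q • y) (p • x + q • y)
      = p^2 * B x x + 2*p*q * B x y + q^2 * B y y := by
  simp only [map_add, map_smul, LinearMap.add_apply, LinearMap.smul_apply, smul_eq_mul]
  rw [hsymm y x]; ring

/-- If `B x x > 0` and the Gram determinant of `x, y` is positive, then `span {x, y}`
is a plane on which `B` is positive definite. -/
lemma plane_lemma {M : Type*} [AddCommGroup M] [Module ℝ M]
    (B : M →ₗ[ℝ] M →ₗ[ℝ] ℝ) (hsymm : ∀ x y, B x y = B y x) (x y : M)
    (hx : 0 < B x x) (hD : (B x y)^2 < B x x * B y y) :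
    finrank ℝ (Submodule.span ℝ {x, y}) = 2 ∧ PosDefOn B (Submodule.span ℝ {x, y}) := by
  have hposall : ∀ p q : ℝ, (p ≠ 0 ∨ q ≠ 0) → 0 < B (p • x + q • y) (p • x + q • y) := by
    intro p q h
    rw [aux_expand B hsymm x y p q]
    exact aux_quad_pos _ _ _ _ _ hx hD h
  have hli : LinearIndependent ℝ ![x, y] := by
    rw [LinearIndependent.pair_iff]
    intro p q hpq
    by_contra h
    push_neg at h
    rcases eq_or_ne p 0 with hp | hp
    · have := hposall p q (Or.inr (h hp))
      rw [hpq] at this; simp at this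
    · have := hposall p q (Or.inl hp)
      rw [hpq] at this; simp at this
  constructor
  · have hr : (Set.range ![x, y]) = {x, y} := by
      simp [Set.range_subset_iff]; exact Set.pair_comm y x
    rw [← hr, finrank_span_eq_card hli]
    simp
  · intro z hz hz0
    obtain ⟨p, q, rfl⟩ := Submodule.mem_span_pair.mp hz
    apply hposall
    by_contra h
    push_neg at h
    rw [h.1, h.2] at hz0
    simp at hz0

theorem stmt0 (M : Type*) [AddCommGroup M] [Module ℝ M] [FiniteDimensional ℝ M]
    (B : M →ₗ[ℝ] M →ₗ[ℝ] ℝ)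
    (hsymm : ∀ x y, B x y = B y x)
    (hnd : ∀ x, (∀ y, B x y = 0) → x = 0)
    (hpos2 : ∃ W : Submodule ℝ M, finrank ℝ W = 2 ∧ PosDefOn B W)
    (v1 v2 : M) (h1 : 0 < B v1 v1) (h2 : 0 < B v2 v2) :
    ∃ v : M,
      (finrank ℝ (Submodule.span ℝ {v, v1}) = 2 ∧
        PosDefOn B (Submodule.span ℝ {v, v1})) ∧
      (finrank ℝ (Submodule.span ℝ {v, v2}) = 2 ∧
        PosDefOn B (Submodule.span ℝ {v, v2})) := by
  -- Find `u` with `B u v1 = 0` and `B u u > 0`, inside the positive-definite plane `W`.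
  obtain ⟨u, huv1, hqu⟩ : ∃ u : M, B u v1 = 0 ∧ 0 < B u u := by
    obtain ⟨W, hW2, hWpos⟩ := hpos2
    set f : W →ₗ[ℝ] ℝ := (B.flip v1).comp W.subtype with hf
    have hker : LinearMap.ker f ≠ ⊥ := by
      intro h
      have hrk := LinearMap.finrank_range_add_finrank_ker f
      rw [h, finrank_bot, hW2] at hrk
      have : finrank ℝ (LinearMap.range f) ≤ 1 := by
        simpa using Submodule.finrank_le (LinearMap.range f)
      omega
    obtain ⟨u0, hu0ne⟩ := Submodule.exists_mem_ne_zero_of_ne_bot hker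
    obtain ⟨hu0mem, hu0⟩ := hu0ne
    refine ⟨(u0 : M), ?_, ?_⟩
    · have : f u0 = 0 := hu0mem
      simpa [hf] using this
    · exact hWpos _ u0.2 (by simpa using hu0)
  -- Choose a suitable scalar `s` and set `v = v1 + s • u`.
  obtain ⟨s, hs0, hspos⟩ :=
    key_real (B v1 v1) (B v2 v2) (B u u) (B v1 v2) (B u v2) h1 h2 hqu
  have hv1u : B v1 u = 0 := by rw [hsymm v1 u]; exact huv1
  refine ⟨v1 + s • u, ?_, ?_⟩
  · -- plane spanned by v and v1
    have hBvv : B (v1 + s • u) (v1 + s • u) = B v1 v1 + s^2 * B u u := by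
      simp only [map_add, map_smul, LinearMap.add_apply, LinearMap.smul_apply, smul_eq_mul,
        hv1u, huv1]
      ring
    have hBvv1 : B (v1 + s • u) v1 = B v1 v1 := by
      simp only [map_add, map_smul, LinearMap.add_apply, LinearMap.smul_apply, smul_eq_mul,
        huv1]
      ring
    have hs2 : 0 < s^2 := by positivity
    apply plane_lemma B hsymm
    · rw [hBvv]; nlinarith
    · rw [hBvv, hBvv1]; nlinarith [mul_pos (mul_pos hs2 hqu) h1]
  · -- plane spanned by v and v2
    have hBvv : B (v1 + s • u) (v1 + s • u) = B v1 v1 + s^2 * B u u := by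
      simp only [map_add, map_smul, LinearMap.add_apply, LinearMap.smul_apply, smul_eq_mul,
        hv1u, huv1]
      ring
    have hBvv2 : B (v1 + s • u) v2 = B v1 v2 + s * B u v2 := by
      simp only [map_add, map_smul, LinearMap.add_apply, LinearMap.smul_apply, smul_eq_mul]
    have hs2 : 0 < s^2 := by positivity
    apply plane_lemma B hsymm
    · rw [hBvv]; nlinarith
    · rw [hBvv, hBvv2]; nlinarith [hspos]
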